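/- Let $\mathbb{K}$ be a field of characteristic zero, let $n \geq 2$ and $d \geq n+1$, and let $J_d = (x_0^{d-1},\dots,x_n^{d-1}) \subseteq S = \mathbb{K}[x_0,\dots,x_n]$, $H = \sum_{i=0}^n x_i$. Suppose $G \in S$ is homogeneous of degree $d-n-1$ with $G \cdot H^{d(n-1)} \in J_d$, and suppose that for all $i \neq j$ the polynomial $(\partial_{x_i} - \partial_{x_j})(G)$ vanishes. Then $G = 0$. -/

import Mathlib

open MvPolynomial

section StmtAux

variable {R : Type*} [CommSemiring R]

lemma coeff_pderiv_aux {σ : Type*} [DecidableEq σ] (i : σ) (f : MvPolynomial σ R) (m : σ →₀ ℕ) :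
    coeff m (pderiv i f) = ((m i : R) + 1) * coeff (m + Finsupp.single i 1) f := by
  induction f using MvPolynomial.induction_on' with
  | add p q hp hq => simp [map_add, hp, hq, mul_add]
  | monomial s a =>
    rw [pderiv_monomial, coeff_monomial, coeff_monomial]
    split_ifs with h1 h2 h2
    · subst h2
      rw [Finsupp.add_apply, Finsupp.single_eq_same]
      push_cast
      ring
    · have hsi : s i = 0 := by
        by_contra hsi
        apply h2
        rw [← h1, tsub_add_cancel_of_le (Finsupp.single_le_iff.mpr (by omega))]
      rw [hsi]; simp
    · exfalso; apply h1; subst h2; exact add_tsub_cancel_right _ _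
    · simp

lemma pderiv_comm_aux {σ : Type*} [DecidableEq σ] (i j : σ) (f : MvPolynomial σ R) :
    pderiv i (pderiv j f) = pderiv j (pderiv i f) := by
  ext m
  rw [coeff_pderiv_aux, coeff_pderiv_aux, coeff_pderiv_aux, coeff_pderiv_aux]
  rw [add_right_comm]
  rcases eq_or_ne i j with rfl | hij
  · ring
  · rw [Finsupp.add_apply, Finsupp.add_apply, Finsupp.single_apply, Finsupp.single_apply,
      if_neg hij, if_neg (Ne.symm hij)]
    push_cast
    ring

lemma degree_eq_sum_univ {σ : Type*} [Fintype σ] (a : σ →₀ ℕ) :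
    a.degree = ∑ i, a i :=
  Finset.sum_subset (Finset.subset_univ _) fun _ _ hx => Finsupp.notMem_support_iff.mp hx

lemma degree_add_single {σ : Type*} [Fintype σ] [DecidableEq σ] (a : σ →₀ ℕ) (i : σ) :
    (a + Finsupp.single i 1).degree = a.degree + 1 := by
  rw [degree_eq_sum_univ, degree_eq_sum_univ]
  simp only [Finsupp.add_apply]
  rw [Finset.sum_add_distrib]
  congr 1
  simp [Finsupp.single_apply]

lemma homog_pderiv {σ : Type*} [Fintype σ] [DecidableEq σ] {P : MvPolynomial σ R} {m : ℕ}
    (h : P.IsHomogeneous (m + 1)) (i : σ) : (pderiv i P).IsHomogeneous m := by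
  intro d hd
  rw [coeff_pderiv_aux] at hd
  have h2 : coeff (d + Finsupp.single i 1) P ≠ 0 := by
    intro h0; rw [h0, mul_zero] at hd; exact hd rfl
  have h3 := h h2
  have e1 : (1 : σ → ℕ) = fun _ => 1 := rfl
  rw [e1, ← Finsupp.degree_eq_weight_one] at h3 ⊢
  rw [degree_add_single] at h3
  omega

lemma pderiv_sum_X {N : ℕ} (i : Fin (N + 1)) :
    pderiv i (∑ j : Fin (N + 1), X j : MvPolynomial (Fin (N + 1)) R) = 1 := by
  rw [map_sum, Finset.sum_eq_single i (fun j _ hj => pderiv_X_of_ne hj) (by simp)]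
  exact pderiv_X_self i

end StmtAux

section StmtField

variable {K : Type*} [Field K] [CharZero K]

lemma coeff_eq_zero_of_pderiv_eq_zero {N : ℕ} {P : MvPolynomial (Fin (N + 1)) K}
    (h : ∀ i, pderiv i P = 0) {a : Fin (N + 1) →₀ ℕ} (ha : a ≠ 0) : coeff a P = 0 := by
  obtain ⟨i, hi⟩ : ∃ i, a i ≠ 0 := by
    by_contra h'; push_neg at h'; exact ha (Finsupp.ext fun i => h' i)
  have key := coeff_pderiv_aux i P (a - Finsupp.single i 1)
  rw [h i, coeff_zero, tsub_add_cancel_of_le (Finsupp.single_le_iff.mpr (by omega))] at key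
  have hne : ∀ c : ℕ, ((c : K) + 1) ≠ 0 := fun c => by
    have := Nat.cast_add_one_ne_zero (R := K) c
    push_cast at this
    exact this
  exact (mul_eq_zero.mp key.symm).resolve_left (hne _)

lemma eq_C_mul_H_pow {N : ℕ} :
    ∀ (m : ℕ) (G : MvPolynomial (Fin (N + 1)) K), G.IsHomogeneous m →
      (∀ i j : Fin (N + 1), pderiv i G = pderiv j G) →
      ∃ α : K, G = C α * (∑ i : Fin (N + 1), X i) ^ m := by
  intro m
  induction m with
  | zero =>
    intro G hG _
    refine ⟨coeff 0 G, ?_⟩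
    rw [pow_zero, mul_one]
    ext d
    rw [coeff_C]
    split_ifs with h
    · rw [← h]
    · exact hG.coeff_eq_zero (by
        intro hdeg
        exact h (((Finsupp.degree_eq_zero_iff d).mp hdeg).symm))
  | succ m ih =>
    intro G hG hder
    obtain ⟨β, hβ⟩ := ih (pderiv 0 G) (homog_pderiv hG 0)
      (fun i j => by rw [pderiv_comm_aux, pderiv_comm_aux j, hder i j])
    set H : MvPolynomial (Fin (N + 1)) K := ∑ i : Fin (N + 1), X i with hH
    refine ⟨β / (m + 1), ?_⟩
    have hmne : ((m : K) + 1) ≠ 0 := by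
      have := Nat.cast_add_one_ne_zero (R := K) m; push_cast at this; exact this
    have hPder : ∀ i, pderiv i (G - C (β / (m + 1)) * H ^ (m + 1)) = 0 := by
      intro i
      rw [map_sub, pderiv_C_mul, pderiv_pow, pderiv_sum_X, mul_one, Nat.add_sub_cancel,
        hder i 0, hβ]
      rw [sub_eq_zero]
      have hcast : ((m + 1 : ℕ) : MvPolynomial (Fin (N + 1)) K) = C ((m : K) + 1) := by
        push_cast
        simp
      rw [hcast, ← mul_assoc, ← C_mul]
      rw [div_mul_cancel₀ _ hmne]
    have hhom : (G - C (β / (m + 1)) * H ^ (m + 1)).IsHomogeneous (m + 1) := by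
      refine hG.sub ?_
      have hHhom : H.IsHomogeneous 1 :=
        MvPolynomial.IsHomogeneous.sum _ _ _ (fun i _ => isHomogeneous_X _ _)
      have := (hHhom.pow (m + 1)).C_mul (β / (m + 1))
      simpa using this
    have hzero : G - C (β / (m + 1)) * H ^ (m + 1) = 0 := by
      ext a
      rcases eq_or_ne a 0 with rfl | ha
      · rw [coeff_zero]
        exact hhom.coeff_eq_zero (by simp)
      · rw [coeff_zero]
        exact coeff_eq_zero_of_pderiv_eq_zero hPder ha
    exact sub_eq_zero.mp hzero

lemma coeff_H_pow_pos {N : ℕ} :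
    ∀ (s : ℕ) (a : Fin (N + 1) →₀ ℕ), a.degree = s →
      0 < coeff a ((∑ i : Fin (N + 1), X i : MvPolynomial (Fin (N + 1)) ℕ) ^ s) := by
  intro s
  induction s with
  | zero =>
    intro a ha
    rw [(Finsupp.degree_eq_zero_iff a).mp ha]
    simp
  | succ s ih =>
    intro a ha
    obtain ⟨i, hi⟩ : ∃ i, a i ≠ 0 := by
      by_contra h'
      push_neg at h'
      rw [(Finsupp.degree_eq_zero_iff a).mpr (Finsupp.ext fun i => h' i)] at ha
      simp at ha
    have hle : Finsupp.single i 1 ≤ a := Finsupp.single_le_iff.mpr (by omega)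
    have hab : Finsupp.single i 1 + (a - Finsupp.single i 1) = a := add_tsub_cancel_of_le hle
    have hdb : (a - Finsupp.single i 1).degree = s := by
      have h := degree_add_single (a - Finsupp.single i 1) i
      rw [tsub_add_cancel_of_le hle] at h
      omega
    have h1 : 0 < coeff a (X i *
        (∑ j : Fin (N + 1), X j : MvPolynomial (Fin (N + 1)) ℕ) ^ s) := by
      rw [← hab, coeff_X_mul]
      exact ih _ hdb
    have hpow : (∑ j : Fin (N + 1), X j : MvPolynomial (Fin (N + 1)) ℕ) ^ (s + 1)
        = ∑ j : Fin (N + 1), X j *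
            (∑ j : Fin (N + 1), X j : MvPolynomial (Fin (N + 1)) ℕ) ^ s := by
      rw [pow_succ, mul_comm, Finset.sum_mul]
    have h2 : coeff a (X i *
          (∑ j : Fin (N + 1), X j : MvPolynomial (Fin (N + 1)) ℕ) ^ s)
        ≤ coeff a ((∑ j : Fin (N + 1), X j : MvPolynomial (Fin (N + 1)) ℕ) ^ (s + 1)) := by
      rw [hpow, coeff_sum]
      exact Finset.single_le_sum
        (f := fun j => coeff a (X j *
          (∑ j : Fin (N + 1), X j : MvPolynomial (Fin (N + 1)) ℕ) ^ s))
        (fun j _ => Nat.zero_le _) (Finset.mem_univ i)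
    exact lt_of_lt_of_le h1 h2

end StmtField

/-- In characteristic zero, for `n ≥ 2`, `d ≥ n+1`,
`J_d = (x₀^(d-1),…,xₙ^(d-1))` and `H = x₀ + ⋯ + xₙ`: if `G` is homogeneous of degree
`d-n-1`, `G·H^(d(n-1)) ∈ J_d`, and `(∂ᵢ - ∂ⱼ)G = 0` for all `i ≠ j`, then `G = 0`. -/
theorem stmt16 {𝕂 : Type*} [Field 𝕂] [CharZero 𝕂] (n d : ℕ) (hn : 2 ≤ n) (hd : n + 1 ≤ d)
    (G : MvPolynomial (Fin (n + 1)) 𝕂) (hG : G.IsHomogeneous (d - (n + 1)))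
    (hJ : G * (∑ i : Fin (n + 1), (X i : MvPolynomial (Fin (n + 1)) 𝕂)) ^ (d * (n - 1))
      ∈ Ideal.span (Set.range fun i : Fin (n + 1) =>
          (X i : MvPolynomial (Fin (n + 1)) 𝕂) ^ (d - 1)))
    (hder : ∀ i j : Fin (n + 1), i ≠ j → pderiv i G - pderiv j G = 0) :
    G = 0 := by
  set H : MvPolynomial (Fin (n + 1)) 𝕂 := ∑ i : Fin (n + 1), X i with hH
  have hder' : ∀ i j : Fin (n + 1), pderiv i G = pderiv j G := by
    intro i j
    rcases eq_or_ne i j with rfl | hij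
    · rfl
    · exact sub_eq_zero.mp (hder i j hij)
  obtain ⟨α, hα⟩ := eq_C_mul_H_pow (d - (n + 1)) G hG hder'
  have key : (d - (n + 1)) + d * (n - 1) + (d - (n + 1)) = (n + 1) * (d - 2) := by
    obtain ⟨k, rfl⟩ := Nat.exists_eq_add_of_le hn
    obtain ⟨e, rfl⟩ := Nat.exists_eq_add_of_le hd
    have e1 : 2 + k + 1 + e - (2 + k + 1) = e := by omega
    have e2 : 2 + k - 1 = k + 1 := by omega
    have e3 : 2 + k + 1 + e - 2 = k + 1 + e := by omega
    rw [e1, e2, e3]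
    ring
  set a0 : Fin (n + 1) →₀ ℕ := Finsupp.equivFunOnFinite.symm (fun _ => d - 2) with ha0
  have ha0apply : ∀ i, a0 i = d - 2 := fun i => rfl
  have ha0deg : a0.degree = (n + 1) * (d - 2) := by
    rw [degree_eq_sum_univ]
    simp only [ha0apply]
    simp [Finset.sum_const, mul_comm]
  have hmem : C α * H ^ ((n + 1) * (d - 2))
      ∈ Ideal.span (Set.range fun i : Fin (n + 1) =>
          (X i : MvPolynomial (Fin (n + 1)) 𝕂) ^ (d - 1)) := by
    have h2 : (G * H ^ (d * (n - 1))) * H ^ (d - (n + 1))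
        = C α * H ^ ((n + 1) * (d - 2)) := by
      rw [hα, ← key]
      ring
    rw [← h2]
    exact Ideal.mul_mem_right _ _ hJ
  have hcoeff0 : coeff a0 (C α * H ^ ((n + 1) * (d - 2))) = 0 := by
    rw [Ideal.mem_span_range_iff_exists_fun] at hmem
    obtain ⟨c, hc⟩ := hmem
    rw [← hc, coeff_sum]
    apply Finset.sum_eq_zero
    intro i _
    rw [coeff_mul]
    apply Finset.sum_eq_zero
    rintro ⟨p, q⟩ hpq
    replace hpq : p + q = a0 := Finset.HasAntidiagonal.mem_antidiagonal.mp hpq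
    rw [coeff_X_pow]
    have hne : Finsupp.single i (d - 1) ≠ q := by
      intro h
      have hq : q i = d - 1 := by rw [← h]; simp
      have hle : q i ≤ a0 i := by
        have hpq' : (p + q) i = a0 i := by rw [hpq]
        rw [Finsupp.add_apply] at hpq'
        omega
      rw [ha0apply] at hle
      omega
    rw [if_neg hne, mul_zero]
  have hmap : (MvPolynomial.map (Nat.castRingHom 𝕂)
      ((∑ i : Fin (n + 1), X i : MvPolynomial (Fin (n + 1)) ℕ) ^ ((n + 1) * (d - 2))))
      = H ^ ((n + 1) * (d - 2)) := by
    rw [map_pow, map_sum]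
    simp [MvPolynomial.map_X]
    rw [hH]
  have hHcoeff : coeff a0 (H ^ ((n + 1) * (d - 2))) ≠ 0 := by
    rw [← hmap, MvPolynomial.coeff_map]
    exact (Nat.cast_ne_zero (R := 𝕂)).mpr (coeff_H_pow_pos _ a0 ha0deg).ne'
  rw [coeff_C_mul] at hcoeff0
  have hα0 : α = 0 := (mul_eq_zero.mp hcoeff0).resolve_right hHcoeff
  rw [hα, hα0, map_zero, zero_mul]
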